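/- Let α ≤ ω₁ and write α = λ+2n+i with λ a limit ordinal or 0, n ∈ ω, i ∈ {0,1}, and set α' = λ+n. Then: (1) for every finite broom set B ∈ B_α, (i) D_iie^{α'}(B) is finite, and (ii) if α is even, D_iie^{α'}(B) is either empty or equal to {∅}; (2) for every infinite broom set A ∈ A_α, (i) D_iie^{α'}(D_iie(A)) is finite, and (ii) if α is even, D_iie^{α'}(D_iie(A)) is either empty or equal to {∅}. -/

import Mathlib

noncomputable section
open Classical Set Topology Filter Ordinal

universe u v

namespace FBorelPaper

/-! ### Ordinal parity -/

/-- The first uncountable ordinal. -/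
def omega1 : Ordinal.{0} := Ordinal.omega 1

/-- An ordinal `a = λ + m` (with `λ` limit or zero, `m < ω`) is *even* iff `m` is even. -/
def EvenOrd (a : Ordinal.{0}) : Prop := a % 2 = 0

/-- An ordinal `a = λ + m` (with `λ` limit or zero, `m < ω`) is *odd* iff `m` is odd. -/
def OddOrd (a : Ordinal.{0}) : Prop := a % 2 = 1

/-- For `a = λ + 2n + i` (with `λ` limit or zero, `n < ω`, `i ∈ {0,1}`),
`ordPrime a = λ + n` (the ordinal `α'` of the paper). -/
def ordPrime (a : Ordinal.{0}) : Ordinal.{0} :=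
  Ordinal.omega0 * (a / Ordinal.omega0) + (a % Ordinal.omega0) / 2

/-! ### The F-Borel hierarchy -/

/-- The `F`-Borel hierarchy of a topological space: `FBorel Y 0` is the family of closed
sets, and for `0 < a`, `FBorel Y a` consists of all countable unions (for odd `a`),
resp. countable intersections (for even `a`), of members of `⋃ b < a, FBorel Y b`. -/
def FBorel (Y : Type u) [TopologicalSpace Y] : Ordinal.{0} → Set (Set Y) :=
  WellFounded.fix Ordinal.lt_wf (C := fun _ => Set (Set Y)) fun a ih =>
    if a = 0 then { F | IsClosed F }
    else if EvenOrd a then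
      { S | ∃ f : ℕ → Set Y, (∀ n, ∃ b, ∃ h : b < a, f n ∈ ih b h) ∧ S = ⋂ n, f n }
    else
      { S | ∃ f : ℕ → Set Y, (∀ n, ∃ b, ∃ h : b < a, f n ∈ ih b h) ∧ S = ⋃ n, f n }

/-- The list `(σ 0, …, σ (k-1))` of the first `k` values of `σ : ℕ → ℕ`. -/
def seqPrefix (σ : ℕ → ℕ) (k : ℕ) : List ℕ := List.ofFn fun i : Fin k => σ i

/-- A Suslin scheme: a monotone family of sets indexed by finite sequences. -/
def IsSuslinScheme {Y : Type u} (C : List ℕ → Set Y) : Prop :=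
  ∀ ⦃s t : List ℕ⦄, s <+: t → C t ⊆ C s

/-- The Suslin operation `A(C) = ⋃_{σ ∈ ω^ω} ⋂_k C(σ|k)`. -/
def suslinOp {Y : Type u} (C : List ℕ → Set Y) : Set Y :=
  ⋃ σ : ℕ → ℕ, ⋂ k : ℕ, C (seqPrefix σ k)

/-- The Suslin-F subsets of `Y`: results of the Suslin operation applied to schemes of
closed sets. -/
def SuslinF (Y : Type u) [TopologicalSpace Y] : Set (Set Y) :=
  { S | ∃ C : List ℕ → Set Y, (∀ s, IsClosed (C s)) ∧ S = suslinOp C }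

/-- The classes `F_a(Y)` for `a ≤ ω₁`, where `F_{ω₁}(Y)` is the class of Suslin-F sets. -/
def FClass (Y : Type u) [TopologicalSpace Y] (a : Ordinal.{0}) : Set (Set Y) :=
  if a < omega1 then FBorel Y a else SuslinF Y

/-- `ComplIn Y X` is the complexity of `X` in `Y`: the least `a ≤ ω₁` with `X ∈ F_a(Y)`. -/
def ComplIn (Y : Type u) [TopologicalSpace Y] (X : Set Y) : Ordinal.{0} :=
  sInf { a : Ordinal.{0} | a ≤ omega1 ∧ X ∈ FClass Y a }

/-! ### Compactifications, K-analytic spaces, local complexity -/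

/-- `(K, e)` is a compactification of `X`: `K` is compact Hausdorff and `e` is a dense
embedding of `X` into `K`. -/
def IsCompactification (X : Type u) [TopologicalSpace X] (K : Type u) [TopologicalSpace K]
    (e : X → K) : Prop :=
  CompactSpace K ∧ T2Space K ∧ IsEmbedding e ∧ DenseRange e

/-- The set `Compl(X)` of all complexities attained by `X` in its compactifications. -/
def AttainedCompl (X : Type u) [TopologicalSpace X] : Set Ordinal.{0} :=
  { γ | ∃ (K : Type u) (_ : TopologicalSpace K) (e : X → K),
      IsCompactification X K e ∧ Set.range e ∈ SuslinF K ∧ γ = ComplIn K (Set.range e) }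

/-- A topological space is K-analytic iff it embeds as a Suslin-F subset of some compact
Hausdorff space. -/
def IsKAnalytic (X : Type u) [TopologicalSpace X] : Prop :=
  ∃ (K : Type u) (_ : TopologicalSpace K) (e : X → K),
    CompactSpace K ∧ T2Space K ∧ IsEmbedding e ∧ Set.range e ∈ SuslinF K

/-- The local complexity `Compl_y(X, Y)`: the least complexity of `cl(U) ∩ X` in `Y` over
all open neighborhoods `U` of `y` in `Y`. -/
def locComplAt (Y : Type u) [TopologicalSpace Y] (X : Set Y) (y : Y) : Ordinal.{0} :=
  sInf { γ : Ordinal.{0} | ∃ U : Set Y, IsOpen U ∧ y ∈ U ∧ γ = ComplIn Y (closure U ∩ X) }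

/-- The local complexity `Compl_loc(X, Y) = sup_{x ∈ X} Compl_x(X, Y)`. -/
def locCompl (Y : Type u) [TopologicalSpace Y] (X : Set Y) : Ordinal.{0} :=
  ⨆ x : X, locComplAt Y X (x : Y)

/-- The local complexity `Compl_locbar(X, Y) = sup_{y ∈ Y} Compl_y(X, Y)`. -/
def locComplBar (Y : Type u) [TopologicalSpace Y] (X : Set Y) : Ordinal.{0} :=
  ⨆ y : Y, locComplAt Y X y

/-! ### Trees on ω -/

/-- A tree on `ω`: a set of finite sequences closed under initial segments. -/
def IsTree (T : Set (List ℕ)) : Prop := ∀ ⦃s t : List ℕ⦄, s <+: t → t ∈ T → s ∈ T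

/-- A tree is well-founded iff it carries no infinite branch. -/
def WellFoundedTree (T : Set (List ℕ)) : Prop := ¬ ∃ σ : ℕ → ℕ, ∀ k : ℕ, seqPrefix σ k ∈ T

/-- `t` is a leaf of `T`: it belongs to `T` and has no immediate successor in `T`. -/
def IsLeafOf (T : Set (List ℕ)) (t : List ℕ) : Prop := t ∈ T ∧ ∀ n : ℕ, t ++ [n] ∉ T

/-- The tree `T^t = {s | t⌢s ∈ T}` corresponding to `t` in `T`. -/
def subtreeAt (T : Set (List ℕ)) (t : List ℕ) : Set (List ℕ) := { s | t ++ s ∈ T }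

/-- The smallest tree containing a set `S` of finite sequences. -/
def clTr (S : Set (List ℕ)) : Set (List ℕ) := { u | ∃ s ∈ S, u <+: s }

/-- The leaf derivative: keep the elements having some proper extension in `T`. -/
def leafDeriv (T : Set (List ℕ)) : Set (List ℕ) := { t ∈ T | ∃ s ∈ T, t <+: s ∧ t ≠ s }

/-- The derivative `D_iie`: keep the `t ∈ T` admitting infinitely many pairwise
incomparable extensions in `T` of pairwise different lengths. -/
def Diie (T : Set (List ℕ)) : Set (List ℕ) :=
  { t ∈ T | ∃ g : ℕ → List ℕ, (∀ n, g n ∈ T ∧ t <+: g n) ∧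
      ∀ ⦃m n : ℕ⦄, m < n →
        (¬ g m <+: g n) ∧ (¬ g n <+: g m) ∧ (g m).length ≠ (g n).length }

/-- Transfinitely iterated derivative, starting from `cl_Tr S` and taking intersections
at limit stages. -/
def iterDeriv (D : Set (List ℕ) → Set (List ℕ)) (S : Set (List ℕ)) (γ : Ordinal.{0}) :
    Set (List ℕ) :=
  Ordinal.limitRecOn γ (clTr S) (fun _ ih => D ih)
    (fun a _ ih => ⋂ b : Ordinal.{0}, ⋂ h : b < a, ih b h)

/-- The rank associated with the leaf derivative: the least `γ` such that the `(γ+1)`-st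
iterated leaf derivative is empty, and `ω₁` if there is no such countable ordinal. -/
def leafRank (T : Set (List ℕ)) : Ordinal.{0} :=
  if ∃ γ : Ordinal.{0}, γ < omega1 ∧ iterDeriv leafDeriv T (γ + 1) = ∅ then
    sInf { γ : Ordinal.{0} | iterDeriv leafDeriv T (γ + 1) = ∅ }
  else omega1

/-- `E` is the canonical extension of the `l(T)`-scheme `H` to the whole of `T`:
it agrees with `H` on the leaves of `T`, and at a non-leaf `t ∈ T` it is the union
(resp. the intersection) of its values at the immediate successors of `t` in `T` when
the leaf-rank of `T^t` is odd (resp. even). -/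
def IsSchemeExtension (Y : Type u) [TopologicalSpace Y] (T : Set (List ℕ))
    (H E : List ℕ → Set Y) : Prop :=
  (∀ t, IsLeafOf T t → E t = H t) ∧
  (∀ t ∈ T, ¬ IsLeafOf T t → OddOrd (leafRank (subtreeAt T t)) →
      E t = ⋃ n ∈ { n : ℕ | t ++ [n] ∈ T }, E (t ++ [n])) ∧
  (∀ t ∈ T, ¬ IsLeafOf T t → EvenOrd (leafRank (subtreeAt T t)) →
      E t = ⋂ n ∈ { n : ℕ | t ++ [n] ∈ T }, E (t ++ [n]))

/-- `H` (an `l(T)`-scheme of subsets of `X`) is a *universal simple `F_α`-representation*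
of `X`: `r_l(T) ≤ α`, and for every space `Y` containing (a copy of) `X`, the extension
of the scheme of closures `(cl_Y (H t))_t` computes `X` at the root. -/
def HasUniversalSimpleRep (X : Type u) [TopologicalSpace X] (α : Ordinal.{0}) : Prop :=
  ∃ (T : Set (List ℕ)) (H : List ℕ → Set X), IsTree T ∧ WellFoundedTree T ∧ [] ∈ T ∧
    leafRank T ≤ α ∧
    ∀ (Y : Type u) (_ : TopologicalSpace Y) (e : X → Y), IsEmbedding e →
      ∃ E : List ℕ → Set Y,
        IsSchemeExtension Y T (fun t => closure (e '' H t)) E ∧ E [] = Set.range e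

/-! ### Canonical trees -/

/-- Auxiliary indices for the canonical trees: at a successor `a = b + 1` every index is
`b`, and at a countable limit the indices enumerate all ordinals `< a` injectively. -/
def canonIdx (a : Ordinal.{0}) (n : ℕ) : Ordinal.{0} :=
  if hs : ∃ b, a = b + 1 then hs.choose
  else if hf : ∃ f : ℕ → Ordinal.{0}, Function.Injective f ∧ Set.range f = Set.Iio a then
    hf.choose n
  else 0

theorem canonIdx_lt {a : Ordinal.{0}} (h0 : a ≠ 0) (n : ℕ) : canonIdx a n < a := by
  unfold canonIdx
  split
  · next hs =>
      conv_rhs => rw [hs.choose_spec]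
      rw [Ordinal.add_one_eq_succ]
      exact Order.lt_succ _
  · split
    · next hf =>
        have hmem : hf.choose n ∈ Set.range hf.choose := Set.mem_range_self n
        rw [hf.choose_spec.2] at hmem
        exact hmem
    · exact pos_iff_ne_zero.mpr h0

/-- The canonical "maximal" trees `T_α` of leaf-rank `α < ω₁` (with `T_α = ω^{<ω}` for
`α ≥ ω₁`): `T_0 = {∅}`, `T_{α+1} = {∅} ∪ ⋃_n n⌢T_α`, and at countable limits
`T_α = {∅} ∪ ⋃_n n⌢T_{π_α(n)}` for an injective enumeration `π_α` of `α`. -/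
def canonTree : Ordinal.{0} → Set (List ℕ) :=
  WellFounded.fix Ordinal.lt_wf (C := fun _ => Set (List ℕ)) fun a ih =>
    if h0 : a = 0 then {([] : List ℕ)}
    else if omega1 ≤ a then Set.univ
    else {([] : List ℕ)} ∪ ⋃ n : ℕ, (List.cons n) '' ih (canonIdx a n) (canonIdx_lt h0 n)

/-- The canonical trees `T^c_α`: `T_{α'}` for even `α`, and `{∅} ∪ 1⌢T_{α'}` for odd `α`. -/
def canonTreeC (a : Ordinal.{0}) : Set (List ℕ) :=
  if EvenOrd a then canonTree (ordPrime a)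
  else {([] : List ℕ)} ∪ (List.cons 1) '' canonTree (ordPrime a)

/-- The canonical trees `T^c_{α,i} = {∅} ∪ i⌢T_{α'}` (for odd `α`). -/
def canonTreeCi (a : Ordinal.{0}) (i : ℕ) : Set (List ℕ) :=
  {([] : List ℕ)} ∪ (List.cons i) '' canonTree (ordPrime a)

/-! ### Admissible maps, `R_T` and regular representations -/

/-- An admissible map on a tree `T`: monotone w.r.t. extension, with
`|φ(t)| = t(0) + ⋯ + t(|t|-1)` for all `t ∈ T`. -/
def Admissible (T : Set (List ℕ)) (φ : List ℕ → List ℕ) : Prop :=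
  (∀ ⦃s t : List ℕ⦄, s ∈ T → t ∈ T → s <+: t → φ s <+: φ t) ∧
  (∀ t ∈ T, (φ t).length = t.sum)

/-- `R_T(C)`: the points of `C(∅)` admitting an admissible witness map along `T`. -/
def RT {Y : Type u} (T : Set (List ℕ)) (C : List ℕ → Set Y) : Set Y :=
  { x | x ∈ C [] ∧ ∃ φ : List ℕ → List ℕ, Admissible T φ ∧ ∀ t ∈ T, x ∈ C (φ t) }

/-- `R_α(C) = R_{T^c_α}(C)`. -/
def Ralpha {Y : Type u} (a : Ordinal.{0}) (C : List ℕ → Set Y) : Set Y :=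
  RT (canonTreeC a) C

/-- A Suslin scheme `C` of subsets of `X ⊆ Y` is *complete on `X`*: it is a Suslin scheme
on `X` (it consists of subsets of `X` and the Suslin operation applied to it covers `X`)
such that every nontrivial filter containing, for each `n`, a set `C s` with `|s| = n`,
has an accumulation point in `X`. -/
def IsCompleteOn (Y : Type u) [TopologicalSpace Y] (X : Set Y) (C : List ℕ → Set Y) :
    Prop :=
  IsSuslinScheme C ∧ (∀ s, C s ⊆ X) ∧ X ⊆ suslinOp C ∧
  ∀ F : Filter Y, F.NeBot → (∀ n : ℕ, ∃ s : List ℕ, s.length = n ∧ C s ∈ F) →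
    ∃ x ∈ X, ClusterPt x F

/-- The tree `S_C(y)` of finite sequences `s` with `y ∈ cl_Y (C s)`. -/
def SCtree (Y : Type u) [TopologicalSpace Y] (C : List ℕ → Set Y) (y : Y) :
    Set (List ℕ) :=
  { s : List ℕ | y ∈ closure (C s) }

/-! ### Zoom spaces -/

/-- The set of isolated points of a topological space. -/
def IsolPts (Y : Type u) [TopologicalSpace Y] : Set Y := { y | IsOpen ({y} : Set Y) }

/-- The underlying set of the zoom space `Z(Y, X)`: the non-isolated points of `Y`
together with the disjoint union of the spaces `X i`, `i ∈ I_Y`. -/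
def ZoomCarrier (Y : Type u) [TopologicalSpace Y] (X : IsolPts Y → Type v) :
    Type (max u v) :=
  ({ y : Y // y ∉ IsolPts Y }) ⊕ ((i : IsolPts Y) × X i)

/-- The basic set `V_U ⊆ Z(Y, X)` associated with `U ⊆ Y`:
`V_U = (U ∖ I_Y) ∪ ⋃ {X i | i ∈ U ∩ I_Y}`. -/
def zoomVSet (Y : Type u) [TopologicalSpace Y] (X : IsolPts Y → Type v) (U : Set Y) :
    Set (ZoomCarrier Y X) :=
  { z | Sum.elim (fun y : { y : Y // y ∉ IsolPts Y } => (y : Y) ∈ U)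
      (fun p : (i : IsolPts Y) × X i => (p.1 : Y) ∈ U) z }

/-- The topology of the zoom space `Z(Y, X)`, generated by the open subsets of the
spaces `X i` together with the sets `V_U` for `U` open in `Y`. -/
instance zoomTopology (Y : Type u) [TopologicalSpace Y] (X : IsolPts Y → Type v)
    [∀ i, TopologicalSpace (X i)] : TopologicalSpace (ZoomCarrier Y X) :=
  TopologicalSpace.generateFrom
    ({ B | ∃ (i : IsolPts Y) (W : Set (X i)), IsOpen W ∧
        B = Sum.inr '' ((Sigma.mk i) '' W) } ∪
     { B | ∃ U : Set Y, IsOpen U ∧ B = zoomVSet Y X U })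

/-- The subset of `Z(Y, X)` which is the underlying set of the zoom space `Z(Ys, A)` of
a subspace `Ys ⊆ Y` with respect to subspaces `A i ⊆ X i`
(here the isolated points of `Ys` are identified with those of `Y`). -/
def zoomSub (Y : Type u) [TopologicalSpace Y] (X : IsolPts Y → Type v) (Ys : Set Y)
    (A : ∀ i : IsolPts Y, Set (X i)) : Set (ZoomCarrier Y X) :=
  { z | Sum.elim (fun y : { y : Y // y ∉ IsolPts Y } => (y : Y) ∈ Ys)
      (fun p : (i : IsolPts Y) × X i => p.2 ∈ A p.1) z }

/-! ### Broom sets and broom spaces -/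

/-- A forking sequence: a sequence of nonempty finite sequences with pairwise distinct
first entries. -/
def IsForking (f : ℕ → List ℕ) : Prop :=
  (∀ n, f n ≠ []) ∧ ∀ ⦃m n : ℕ⦄, m ≠ n → (f m).head? ≠ (f n).head?

/-- The hierarchy of finite broom sets: `B ∈ B_α` iff `IsBroomB α B`.
`B_0 = {{∅}}`; for odd `α`, `B_α = B_{<α} ∪ {h⌢B | B ∈ B_{α-1}, h ∈ ω^{<ω}}`; for even
`α > 0`, `B_α = B_{<α} ∪ {⋃_n f_n⌢B_n | B_n ∈ B_{<α}, (f_n) a forking sequence}`. -/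
inductive IsBroomB : Ordinal.{0} → Set (List ℕ) → Prop
  | base : IsBroomB 0 {[]}
  | mono {β α : Ordinal.{0}} {B : Set (List ℕ)} : β < α → IsBroomB β B → IsBroomB α B
  | odd {β : Ordinal.{0}} {B : Set (List ℕ)} (h : List ℕ) : EvenOrd β → IsBroomB β B →
      IsBroomB (β + 1) ((fun s => h ++ s) '' B)
  | even {α : Ordinal.{0}} {f : ℕ → List ℕ} {Bs : ℕ → Set (List ℕ)}
      (g : ℕ → Ordinal.{0}) :
      0 < α → EvenOrd α → IsForking f →
      (∀ n : ℕ, g n < α) → (∀ n : ℕ, IsBroomB (g n) (Bs n)) →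
      IsBroomB α (⋃ n : ℕ, (fun s => f n ++ s) '' Bs n)

/-- The infinite sequence `s⌢ν` obtained by extending the finite sequence `s` by `ν`. -/
def seqAppend (s : List ℕ) (ν : ℕ → ℕ) : ℕ → ℕ :=
  fun k => if h : k < s.length then s.get ⟨k, h⟩ else ν (k - s.length)

/-- `A` is a broom-extension of `B`:
`A = {s⌢f^s_n⌢ν^s_n | s ∈ B, n ∈ ω}` for forking sequences `(f^s_n)_n, s ∈ B`, and
points `ν^s_n ∈ ω^ω`. -/
def IsBroomExtension (B : Set (List ℕ)) (A : Set (ℕ → ℕ)) : Prop :=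
  ∃ (f : List ℕ → ℕ → List ℕ) (ν : List ℕ → ℕ → (ℕ → ℕ)),
    (∀ s ∈ B, IsForking (f s)) ∧
    A = { σ : ℕ → ℕ | ∃ s ∈ B, ∃ n : ℕ, σ = seqAppend (s ++ f s n) (ν s n) }

/-- The hierarchy of infinite broom sets: `A ∈ A_α` iff `A` is a broom-extension of some
`B ∈ B_α`. -/
def IsBroomA (α : Ordinal.{0}) (A : Set (ℕ → ℕ)) : Prop :=
  ∃ B : Set (List ℕ), IsBroomB α B ∧ IsBroomExtension B A

/-- `u` is a finite initial segment of the infinite sequence `σ`. -/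
def InfExtends (u : List ℕ) (σ : ℕ → ℕ) : Prop := seqPrefix σ u.length = u

/-- The tree of all finite initial segments of members of a set of infinite sequences. -/
def clTrInf (S : Set (ℕ → ℕ)) : Set (List ℕ) := { u | ∃ σ ∈ S, InfExtends u σ }

/-- The broom space `T_𝒜` on `ω^ω ∪ {∞}` (with `∞ = none`): every point of `ω^ω` is
isolated, and the neighborhood subbasis at `∞` consists of the complements of single
points of `ω^ω` and of the complements of the sets `A ∈ 𝒜`. -/
def broomTop (𝒜 : Set (Set (ℕ → ℕ))) : TopologicalSpace (Option (ℕ → ℕ)) :=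
  TopologicalSpace.generateFrom
    ({ S | ∃ σ : ℕ → ℕ, S = {Option.some σ} } ∪
     { S | ∃ σ : ℕ → ℕ, S = insert Option.none (Option.some '' ({σ}ᶜ)) } ∪
     { S | ∃ A ∈ 𝒜, S = insert Option.none (Option.some '' Aᶜ) })


/-! ### Auxiliary lemmas for Statement 18 -/

private theorem two_cast' : (2 : Ordinal.{0}) = ((2 : ℕ) : Ordinal.{0}) := by norm_cast

private theorem two_mul_omega0' : (2 : Ordinal.{0}) * Ordinal.omega0 = Ordinal.omega0 := by
  rw [two_cast', Ordinal.natCast_mul_omega0]; norm_num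

theorem ordPrime_rep (q : Ordinal.{0}) (n : ℕ) :
    ordPrime (Ordinal.omega0 * q + n) = Ordinal.omega0 * q + ((n / 2 : ℕ) : Ordinal.{0}) := by
  unfold ordPrime
  rw [Ordinal.mul_add_div _ Ordinal.omega0_ne_zero,
    Ordinal.div_eq_zero_of_lt (Ordinal.nat_lt_omega0 n), add_zero,
    Ordinal.mul_add_mod_self, Ordinal.mod_eq_of_lt (Ordinal.nat_lt_omega0 n), two_cast',
    Ordinal.natCast_div]

theorem mod_two_rep (q : Ordinal.{0}) (n : ℕ) :
    (Ordinal.omega0 * q + n) % 2 = ((n % 2 : ℕ) : Ordinal.{0}) := by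
  conv_lhs => rw [show Ordinal.omega0 * q = 2 * (Ordinal.omega0 * q) by
    rw [← mul_assoc, two_mul_omega0']]
  rw [Ordinal.mul_add_mod_self, two_cast', Ordinal.natCast_mod]

theorem ord_rep (a : Ordinal.{0}) : ∃ (q : Ordinal.{0}) (n : ℕ), a = Ordinal.omega0 * q + n := by
  obtain ⟨n, hn⟩ := Ordinal.lt_omega0.mp (Ordinal.mod_lt a Ordinal.omega0_ne_zero)
  exact ⟨a / Ordinal.omega0, n, by rw [← hn, Ordinal.div_add_mod]⟩

theorem evenOrd_rep (q : Ordinal.{0}) (n : ℕ) :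
    EvenOrd (Ordinal.omega0 * q + n) ↔ n % 2 = 0 := by
  unfold EvenOrd
  rw [mod_two_rep]
  constructor
  · intro h; exact_mod_cast h
  · intro h; rw [h]; norm_num

private theorem div_omega0_rep (q : Ordinal.{0}) (n : ℕ) :
    (Ordinal.omega0 * q + n) / Ordinal.omega0 = q := by
  rw [Ordinal.mul_add_div _ Ordinal.omega0_ne_zero,
    Ordinal.div_eq_zero_of_lt (Ordinal.nat_lt_omega0 n), add_zero]

theorem ordPrime_zero : ordPrime 0 = 0 := by
  unfold ordPrime; simp

theorem ordPrime_mono {a b : Ordinal.{0}} (h : a ≤ b) : ordPrime a ≤ ordPrime b := by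
  obtain ⟨q, n, rfl⟩ := ord_rep a
  obtain ⟨p, m, rfl⟩ := ord_rep b
  rw [ordPrime_rep, ordPrime_rep]
  have hq : q ≤ p := by
    have h1 := Ordinal.div_le_left h Ordinal.omega0
    rwa [div_omega0_rep, div_omega0_rep] at h1
  rcases lt_or_eq_of_le hq with hlt | rfl
  · calc Ordinal.omega0 * q + ((n / 2 : ℕ) : Ordinal.{0})
        ≤ Ordinal.omega0 * q + Ordinal.omega0 :=
          add_le_add_right (Ordinal.nat_lt_omega0 _).le _
      _ = Ordinal.omega0 * (q + 1) := by rw [mul_add_one]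
      _ ≤ Ordinal.omega0 * p := mul_le_mul_right (Order.add_one_le_of_lt hlt) _
      _ ≤ Ordinal.omega0 * p + ((m / 2 : ℕ) : Ordinal.{0}) := le_self_add
  · have hnm : (n : Ordinal.{0}) ≤ m := by rwa [add_le_add_iff_left] at h
    have hnm' : n ≤ m := by exact_mod_cast hnm
    apply add_le_add_right
    have : n / 2 ≤ m / 2 := by omega
    exact_mod_cast this

theorem ordPrime_succ_le {a b : Ordinal.{0}} (hab : a < b) (hb : EvenOrd b) :
    ordPrime a + 1 ≤ ordPrime b := by
  obtain ⟨q, n, rfl⟩ := ord_rep a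
  obtain ⟨p, m, rfl⟩ := ord_rep b
  have hm : m % 2 = 0 := (evenOrd_rep p m).mp hb
  rw [ordPrime_rep, ordPrime_rep]
  have hq : q ≤ p := by
    have h1 := Ordinal.div_le_left hab.le Ordinal.omega0
    rwa [div_omega0_rep, div_omega0_rep] at h1
  have hcast : ∀ k : ℕ, ((k : ℕ) : Ordinal.{0}) + 1 = ((k + 1 : ℕ) : Ordinal.{0}) := by
    intro k; push_cast; ring
  rcases lt_or_eq_of_le hq with hlt | rfl
  · rw [add_assoc, hcast]
    calc Ordinal.omega0 * q + ((n / 2 + 1 : ℕ) : Ordinal.{0})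
        ≤ Ordinal.omega0 * q + Ordinal.omega0 :=
          add_le_add_right (Ordinal.nat_lt_omega0 _).le _
      _ = Ordinal.omega0 * (q + 1) := by rw [mul_add_one]
      _ ≤ Ordinal.omega0 * p := mul_le_mul_right (Order.add_one_le_of_lt hlt) _
      _ ≤ Ordinal.omega0 * p + ((m / 2 : ℕ) : Ordinal.{0}) := le_self_add
  · have hnm : (n : Ordinal.{0}) < m := by rwa [add_lt_add_iff_left] at hab
    have hnm' : n < m := by exact_mod_cast hnm
    rw [add_assoc, hcast]
    apply add_le_add_right
    have : n / 2 + 1 ≤ m / 2 := by omega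
    exact_mod_cast this

theorem ordPrime_succ_even {b : Ordinal.{0}} (hb : EvenOrd b) : ordPrime (b + 1) = ordPrime b := by
  obtain ⟨q, n, rfl⟩ := ord_rep b
  have hn : n % 2 = 0 := (evenOrd_rep q n).mp hb
  have he : Ordinal.omega0 * q + n + 1 = Ordinal.omega0 * q + ((n + 1 : ℕ) : Ordinal.{0}) := by
    push_cast; rw [add_assoc]
  rw [he, ordPrime_rep, ordPrime_rep]
  congr 2
  omega

theorem not_evenOrd_succ {b : Ordinal.{0}} (hb : EvenOrd b) : ¬ EvenOrd (b + 1) := by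
  obtain ⟨q, n, rfl⟩ := ord_rep b
  have hn : n % 2 = 0 := (evenOrd_rep q n).mp hb
  have he : Ordinal.omega0 * q + n + 1 = Ordinal.omega0 * q + ((n + 1 : ℕ) : Ordinal.{0}) := by
    push_cast; rw [add_assoc]
  rw [he, evenOrd_rep]
  omega

/-! #### Basic facts about `clTr`, `Diie`, `iterDeriv` -/

theorem clTr_mono {S T : Set (List ℕ)} (h : S ⊆ T) : clTr S ⊆ clTr T := by
  rintro u ⟨s, hs, hu⟩; exact ⟨s, h hs, hu⟩

theorem clTr_idem (S : Set (List ℕ)) : clTr (clTr S) ⊆ clTr S := by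
  rintro u ⟨s, ⟨w, hw, hsw⟩, hu⟩; exact ⟨w, hw, hu.trans hsw⟩

theorem Diie_subset (T : Set (List ℕ)) : Diie T ⊆ T := fun _ ht => ht.1

theorem Diie_mono {S T : Set (List ℕ)} (h : S ⊆ T) : Diie S ⊆ Diie T := by
  rintro t ⟨ht, g, hg1, hg2⟩
  exact ⟨h ht, g, fun n => ⟨h (hg1 n).1, (hg1 n).2⟩, hg2⟩

theorem Diie_of_finite {S : Set (List ℕ)} (h : S.Finite) : Diie S = ∅ := by
  ext t
  simp only [Set.mem_empty_iff_false, iff_false]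
  rintro ⟨htS, g, hg1, hg2⟩
  have hinj : Function.Injective g := by
    intro a b hab
    by_contra hne
    rcases Nat.lt_or_ge a b with hlt | hge
    · exact (hg2 hlt).2.2 (by rw [hab])
    · exact (hg2 (lt_of_le_of_ne hge (Ne.symm hne))).2.2 (by rw [hab])
  exact (Set.infinite_of_injective_forall_mem hinj fun n => (hg1 n).1) h

theorem finite_prefixes (h : List ℕ) : {u : List ℕ | u <+: h}.Finite := by
  apply Set.Finite.subset (Set.finite_range fun i : Fin (h.length + 1) => h.take i)
  intro u hu
  exact ⟨⟨u.length, Nat.lt_succ_of_le hu.length_le⟩, (List.prefix_iff_eq_take.mp hu).symm⟩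

theorem iterDeriv_zero (D : Set (List ℕ) → Set (List ℕ)) (S : Set (List ℕ)) :
    iterDeriv D S 0 = clTr S := by
  unfold iterDeriv; rw [Ordinal.limitRecOn_zero]

theorem iterDeriv_succ (D : Set (List ℕ) → Set (List ℕ)) (S : Set (List ℕ)) (γ : Ordinal.{0}) :
    iterDeriv D S (γ + 1) = D (iterDeriv D S γ) := by
  unfold iterDeriv; rw [Ordinal.add_one_eq_succ, Ordinal.limitRecOn_succ]

theorem iterDeriv_limit (D : Set (List ℕ) → Set (List ℕ)) (S : Set (List ℕ)) {γ : Ordinal.{0}}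
    (h : Order.IsSuccLimit γ) :
    iterDeriv D S γ = ⋂ b : Ordinal.{0}, ⋂ _ : b < γ, iterDeriv D S b := by
  unfold iterDeriv; rw [Ordinal.limitRecOn_limit _ _ _ _ h]

theorem iterDeriv_anti {D : Set (List ℕ) → Set (List ℕ)} (hD : ∀ T, D T ⊆ T)
    (S : Set (List ℕ)) : ∀ {δ γ : Ordinal.{0}}, γ ≤ δ → iterDeriv D S δ ⊆ iterDeriv D S γ := by
  intro δ
  induction δ using Ordinal.limitRecOn with
  | zero => intro γ h; rw [nonpos_iff_eq_zero.mp h]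
  | add_one δ ih =>
    intro γ h
    rcases lt_or_eq_of_le h with hlt | rfl
    · have h1 : γ ≤ δ := Order.le_of_lt_add_one hlt
      have h2 : iterDeriv D S (δ + 1) ⊆ iterDeriv D S δ := by
        rw [iterDeriv_succ]; exact hD _
      exact h2.trans (ih h1)
    · exact subset_rfl
  | limit δ hlim ih =>
    intro γ h
    rcases lt_or_eq_of_le h with hlt | rfl
    · rw [iterDeriv_limit D S hlim]
      intro x hx
      simp only [Set.mem_iInter] at hx
      exact hx γ hlt
    · exact subset_rfl

theorem iterDeriv_mono_base {S S' : Set (List ℕ)} (h : clTr S ⊆ clTr S') (γ : Ordinal.{0}) :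
    iterDeriv Diie S γ ⊆ iterDeriv Diie S' γ := by
  induction γ using Ordinal.limitRecOn with
  | zero => rw [iterDeriv_zero, iterDeriv_zero]; exact h
  | add_one δ ih =>
    rw [iterDeriv_succ, iterDeriv_succ]
    exact Diie_mono ih
  | limit δ hlim ih =>
    rw [iterDeriv_limit _ _ hlim, iterDeriv_limit _ _ hlim]
    exact Set.iInter₂_mono fun b hb => ih b hb

/-! #### List lemmas -/

theorem prefix_append_cases {u h s : List ℕ} (hu : u <+: h ++ s) :
    u <+: h ∨ ∃ v, v <+: s ∧ u = h ++ v := by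
  rcases le_or_gt u.length h.length with hl | hl
  · left
    have h1 := List.prefix_iff_eq_take.mp hu
    rw [List.take_append, Nat.sub_eq_zero_of_le hl, List.take_zero,
      List.append_nil] at h1
    rw [h1]; exact List.take_prefix _ _
  · right
    have hh : h <+: u := by
      rcases List.prefix_or_prefix_of_prefix hu (List.prefix_append h s) with hc | hc
      · exact absurd hc.length_le (by omega)
      · exact hc
    obtain ⟨v, rfl⟩ := hh
    exact ⟨v, (List.prefix_append_right_inj h).mp hu, rfl⟩

theorem prefix_of_getElem (l1 l2 : List ℕ) (hlen : l1.length ≤ l2.length)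
    (h : ∀ i (h1 : i < l1.length), l1[i] = l2[i]'(by omega)) : l1 <+: l2 := by
  have he : l1 = l2.take l1.length := by
    apply List.ext_getElem (by simp [Nat.min_eq_left hlen])
    intro i h1 h2
    simpa [List.getElem_take] using h i h1
  rw [he]; exact List.take_prefix _ _

/-! #### Claim A : derivatives of shifted broom sets -/

theorem claimA (h : List ℕ) (B : Set (List ℕ)) (γ : Ordinal.{0}) :
    iterDeriv Diie ((fun s => h ++ s) '' B) γ ⊆
      {u : List ℕ | u <+: h} ∪ (fun s => h ++ s) '' iterDeriv Diie B γ := by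
  induction γ using Ordinal.limitRecOn with
  | zero =>
    rw [iterDeriv_zero, iterDeriv_zero]
    rintro u ⟨w, ⟨s, hs, rfl⟩, hu⟩
    rcases prefix_append_cases hu with h1 | ⟨v, hv, rfl⟩
    · exact Or.inl h1
    · exact Or.inr ⟨v, ⟨s, hs, hv⟩, rfl⟩
  | add_one δ ih =>
    rw [iterDeriv_succ, iterDeriv_succ]
    rintro t ⟨htS, g, hg1, hg2⟩
    by_cases hth : t <+: h
    · exact Or.inl hth
    have key : ∀ u, u ∈ iterDeriv Diie ((fun s => h ++ s) '' B) δ → ¬ u <+: h →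
        u.drop h.length ∈ iterDeriv Diie B δ ∧ u = h ++ u.drop h.length := by
      intro u hu hun
      rcases ih hu with h1 | ⟨x, hxX, hx⟩
      · exact absurd h1 hun
      · rw [← hx, List.drop_left]; exact ⟨hxX, rfl⟩
    have keyg : ∀ n, (g n).drop h.length ∈ iterDeriv Diie B δ ∧
        g n = h ++ (g n).drop h.length := by
      intro n
      apply key _ (hg1 n).1
      intro hgh
      exact hth ((hg1 n).2.trans hgh)
    obtain ⟨hsX, hte⟩ := key t htS hth
    right
    refine ⟨t.drop h.length, ⟨hsX, fun n => (g n).drop h.length, ?_, ?_⟩, hte.symm⟩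
    · intro n
      refine ⟨(keyg n).1, ?_⟩
      have h2 := (hg1 n).2
      rw [hte, (keyg n).2] at h2
      exact (List.prefix_append_right_inj h).mp h2
    · intro a b hab
      obtain ⟨hm1, hm2, hm3⟩ := hg2 hab
      refine ⟨?_, ?_, ?_⟩
      · intro hpre
        apply hm1
        rw [(keyg a).2, (keyg b).2]
        exact (List.prefix_append_right_inj h).mpr hpre
      · intro hpre
        apply hm2
        rw [(keyg a).2, (keyg b).2]
        exact (List.prefix_append_right_inj h).mpr hpre
      · intro hlen
        apply hm3
        rw [(keyg a).2, (keyg b).2, List.length_append, List.length_append, hlen]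
  | limit δ hlim ih =>
    rw [iterDeriv_limit _ _ hlim]
    intro t ht
    simp only [Set.mem_iInter] at ht
    by_cases hth : t <+: h
    · exact Or.inl hth
    right
    have h0 : (0 : Ordinal.{0}) < δ := hlim.pos
    have key : ∀ b, b < δ → t.drop h.length ∈ iterDeriv Diie B b ∧
        t = h ++ t.drop h.length := by
      intro b hb
      rcases ih b hb (ht b hb) with h1 | ⟨x, hx, hxe⟩
      · exact absurd h1 hth
      · rw [← hxe, List.drop_left]; exact ⟨hx, rfl⟩
    refine ⟨t.drop h.length, ?_, ((key 0 h0).2).symm⟩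
    rw [iterDeriv_limit _ _ hlim]
    simp only [Set.mem_iInter]
    exact fun b hb => (key b hb).1

/-! #### Claim B : derivatives of forking unions -/

theorem head_of_deriv {fk : List ℕ} (hfk : fk ≠ []) {Bs : Set (List ℕ)} {γ : Ordinal.{0}}
    {t : List ℕ} (ht : t ∈ iterDeriv Diie ((fun s => fk ++ s) '' Bs) γ) (htne : t ≠ []) :
    t.head? = fk.head? := by
  have h0 : t ∈ clTr ((fun s => fk ++ s) '' Bs) := by
    have h1 := iterDeriv_anti Diie_subset _ (zero_le (a := γ)) ht
    rwa [iterDeriv_zero] at h1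
  obtain ⟨w, ⟨s, _, rfl⟩, hu⟩ := h0
  obtain ⟨r, hr⟩ := hu
  calc t.head? = (t ++ r).head? := (List.head?_append_of_ne_nil t htne).symm
    _ = (fk ++ s).head? := by rw [hr]
    _ = fk.head? := List.head?_append_of_ne_nil fk hfk

theorem claimB {f : ℕ → List ℕ} (hf : IsForking f) (Bs : ℕ → Set (List ℕ)) (γ : Ordinal.{0}) :
    iterDeriv Diie (⋃ k, (fun s => f k ++ s) '' Bs k) γ ⊆
      {([] : List ℕ)} ∪ ⋃ k, iterDeriv Diie ((fun s => f k ++ s) '' Bs k) γ := by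
  induction γ using Ordinal.limitRecOn with
  | zero =>
    rw [iterDeriv_zero]
    rintro u ⟨w, hw, hu⟩
    simp only [Set.mem_iUnion] at hw
    obtain ⟨k, hk⟩ := hw
    right
    simp only [Set.mem_iUnion]
    exact ⟨k, by rw [iterDeriv_zero]; exact ⟨w, hk, hu⟩⟩
  | add_one δ ih =>
    rw [iterDeriv_succ]
    rintro t ⟨htS, g, hg1, hg2⟩
    by_cases htne : t = []
    · exact Or.inl (by rw [htne]; exact rfl)
    rcases ih htS with h1 | h2
    · exact absurd (Set.mem_singleton_iff.mp h1) htne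
    simp only [Set.mem_iUnion] at h2
    obtain ⟨k, hk⟩ := h2
    right
    simp only [Set.mem_iUnion]
    refine ⟨k, ?_⟩
    rw [iterDeriv_succ]
    refine ⟨hk, g, ?_, hg2⟩
    intro n
    have hgn := hg1 n
    have hgne : g n ≠ [] := by
      intro he
      rw [he] at hgn
      exact htne (List.prefix_nil.mp hgn.2)
    rcases ih hgn.1 with h3 | h4
    · exact absurd (Set.mem_singleton_iff.mp h3) hgne
    simp only [Set.mem_iUnion] at h4
    obtain ⟨j, hj⟩ := h4
    have hheadt : t.head? = (g n).head? := by
      obtain ⟨r, hr⟩ := hgn.2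
      rw [← hr, List.head?_append_of_ne_nil t htne]
    have hjk : j = k := by
      by_contra hne
      apply hf.2 hne
      rw [← head_of_deriv (hf.1 j) hj hgne, ← head_of_deriv (hf.1 k) hk htne]
      exact hheadt.symm
    rw [hjk] at hj
    exact ⟨hj, hgn.2⟩
  | limit δ hlim ih =>
    rw [iterDeriv_limit _ _ hlim]
    intro t ht
    simp only [Set.mem_iInter] at ht
    by_cases htne : t = []
    · exact Or.inl (by rw [htne]; exact rfl)
    right
    have h0 : (0 : Ordinal.{0}) < δ := hlim.pos
    have key : ∀ b, b < δ → ∃ j, t ∈ iterDeriv Diie ((fun s => f j ++ s) '' Bs j) b := by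
      intro b hb
      rcases ih b hb (ht b hb) with h1 | h2
      · exact absurd (Set.mem_singleton_iff.mp h1) htne
      · simp only [Set.mem_iUnion] at h2; exact h2
    obtain ⟨k, hk⟩ := key 0 h0
    simp only [Set.mem_iUnion]
    refine ⟨k, ?_⟩
    rw [iterDeriv_limit _ _ hlim]
    simp only [Set.mem_iInter]
    intro b hb
    obtain ⟨j, hj⟩ := key b hb
    have hjk : j = k := by
      by_contra hne
      apply hf.2 hne
      rw [← head_of_deriv (hf.1 j) hj htne, ← head_of_deriv (hf.1 k) hk htne]
    rw [hjk] at hj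
    exact hj

/-! #### Part (1) : finite broom sets -/

theorem broom_part1 {α : Ordinal.{0}} {B : Set (List ℕ)} (hB : IsBroomB α B) :
    (iterDeriv Diie B (ordPrime α)).Finite ∧
    (EvenOrd α → iterDeriv Diie B (ordPrime α) ⊆ {([] : List ℕ)}) := by
  induction hB with
  | base =>
    have hsub : iterDeriv Diie {([] : List ℕ)} (ordPrime 0) ⊆ {([] : List ℕ)} := by
      rw [ordPrime_zero, iterDeriv_zero]
      rintro u ⟨s, hs, hu⟩
      rw [Set.mem_singleton_iff.mp hs] at hu
      exact List.prefix_nil.mp hu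
    exact ⟨(Set.finite_singleton _).subset hsub, fun _ => hsub⟩
  | @mono β α B hβα hβ ih =>
    constructor
    · exact ih.1.subset (iterDeriv_anti Diie_subset B (ordPrime_mono hβα.le))
    · intro heven
      have hstep : ordPrime β + 1 ≤ ordPrime α := ordPrime_succ_le hβα heven
      have h1 : iterDeriv Diie B (ordPrime β + 1) = ∅ := by
        rw [iterDeriv_succ]; exact Diie_of_finite ih.1
      have h2 := iterDeriv_anti Diie_subset B hstep
      rw [h1] at h2
      intro x hx
      exact absurd (h2 hx) (Set.notMem_empty x)
  | @odd β B h heven hβ ih =>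
    have heq : ordPrime (β + 1) = ordPrime β := ordPrime_succ_even heven
    constructor
    · rw [heq]
      exact ((finite_prefixes h).union (ih.1.image _)).subset (claimA h B (ordPrime β))
    · intro heven'
      exact absurd heven' (not_evenOrd_succ heven)
  | @even α f Bs g hpos heven hfork hglt hBs ih =>
    have hsub : iterDeriv Diie (⋃ n, (fun s => f n ++ s) '' Bs n) (ordPrime α) ⊆
        {([] : List ℕ)} := by
      intro t ht
      rcases claimB hfork Bs (ordPrime α) ht with h1 | h2
      · exact h1
      exfalso
      simp only [Set.mem_iUnion] at h2
      obtain ⟨k, hk⟩ := h2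
      have hfin : (iterDeriv Diie ((fun s => f k ++ s) '' Bs k) (ordPrime (g k))).Finite :=
        ((finite_prefixes (f k)).union ((ih k).1.image _)).subset (claimA (f k) (Bs k) _)
      have hempty : iterDeriv Diie ((fun s => f k ++ s) '' Bs k) (ordPrime (g k) + 1) = ∅ := by
        rw [iterDeriv_succ]; exact Diie_of_finite hfin
      have hle : ordPrime (g k) + 1 ≤ ordPrime α := ordPrime_succ_le (hglt k) heven
      have h3 := iterDeriv_anti Diie_subset _ hle hk
      rw [hempty] at h3
      exact h3
    exact ⟨(Set.finite_singleton _).subset hsub, fun _ => hsub⟩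

/-! #### Part (2) : infinite broom sets -/

theorem infExtends_getElem {u : List ℕ} {σ : ℕ → ℕ} (h : InfExtends u σ) (i : ℕ)
    (hi : i < u.length) : u[i] = σ i := by
  have h2 : u[i]? = some (σ i) := by
    conv_lhs => rw [← h]
    unfold seqPrefix
    simp [hi]
  rw [List.getElem?_eq_getElem hi] at h2
  exact Option.some_injective _ h2

theorem infExtends_iff {u : List ℕ} {σ : ℕ → ℕ} :
    InfExtends u σ ↔ ∀ i (hi : i < u.length), u[i] = σ i := by
  constructor
  · exact fun h => infExtends_getElem h
  · intro hi
    unfold InfExtends seqPrefix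
    apply List.ext_getElem (by simp)
    intro i h1 h2
    simp only [List.getElem_ofFn]
    exact (hi i h2).symm

theorem infExtends_seqAppend (w : List ℕ) (ν : ℕ → ℕ) : InfExtends w (seqAppend w ν) := by
  rw [infExtends_iff]
  intro i hi
  unfold seqAppend
  rw [dif_pos hi]
  simp

theorem InfExtends.of_prefix {t u : List ℕ} {σ : ℕ → ℕ} (h : t <+: u) (hu : InfExtends u σ) :
    InfExtends t σ := by
  rw [infExtends_iff] at hu ⊢
  intro i hi
  rw [h.getElem hi]
  exact hu i (Nat.lt_of_lt_of_le hi h.length_le)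

theorem prefix_of_infExtends {t u : List ℕ} {σ : ℕ → ℕ} (ht : InfExtends t σ)
    (hu : InfExtends u σ) (hl : t.length ≤ u.length) : t <+: u := by
  apply prefix_of_getElem t u hl
  intro i h1
  rw [infExtends_iff] at ht hu
  rw [ht i h1, hu i (by omega)]

theorem Diie_clTrInf_subset {B : Set (List ℕ)} {A : Set (ℕ → ℕ)}
    (hext : IsBroomExtension B A) : Diie (clTrInf A) ⊆ clTr B := by
  obtain ⟨f, ν, hfork, hA⟩ := hext
  rintro t ⟨htT, g, hg1, hg2⟩
  by_contra htB
  have hbranch : ∀ n : ℕ, ∃ (s : List ℕ) (m : ℕ), s ∈ B ∧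
      InfExtends (g n) (seqAppend (s ++ f s m) (ν s m)) := by
    intro n
    obtain ⟨σ, hσA, hσg⟩ := (hg1 n).1
    rw [hA] at hσA
    obtain ⟨s, hs, m, rfl⟩ := hσA
    exact ⟨s, m, hs, hσg⟩
  choose s m hsB hge using hbranch
  have htσ : ∀ n, InfExtends t (seqAppend (s n ++ f (s n) (m n)) (ν (s n) (m n))) :=
    fun n => InfExtends.of_prefix (hg1 n).2 (hge n)
  have hsσ : ∀ n, InfExtends (s n) (seqAppend (s n ++ f (s n) (m n)) (ν (s n) (m n))) :=
    fun n => InfExtends.of_prefix (List.prefix_append _ _) (infExtends_seqAppend _ _)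
  have hlen : ∀ n, (s n).length < t.length := by
    intro n
    by_contra hle
    push_neg at hle
    exact htB ⟨s n, hsB n, prefix_of_infExtends (htσ n) (hsσ n) hle⟩
  have hstake : ∀ n, s n = t.take (s n).length := fun n =>
    List.prefix_iff_eq_take.mp (prefix_of_infExtends (hsσ n) (htσ n) (hlen n).le)
  have hhead : ∀ n, (f (s n) (m n)).head? =
      some (t[(s n).length]'(hlen n)) := by
    intro n
    have hfne : f (s n) (m n) ≠ [] := (hfork (s n) (hsB n)).1 (m n)
    have hfpos : 0 < (f (s n) (m n)).length := List.length_pos_iff.mpr hfne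
    have hlt : (s n).length < (s n ++ f (s n) (m n)).length := by
      rw [List.length_append]; omega
    have e1 : (s n ++ f (s n) (m n))[(s n).length]'hlt =
        seqAppend (s n ++ f (s n) (m n)) (ν (s n) (m n)) (s n).length :=
      infExtends_getElem (infExtends_seqAppend _ _) _ hlt
    have e2 : (s n ++ f (s n) (m n))[(s n).length]'hlt =
        (f (s n) (m n))[0]'hfpos := by
      rw [List.getElem_append_right (le_refl (s n).length)]
      simp
    have e3 : t[(s n).length]'(hlen n) =
        seqAppend (s n ++ f (s n) (m n)) (ν (s n) (m n)) (s n).length :=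
      infExtends_getElem (htσ n) _ (hlen n)
    rw [List.head?_eq_getElem?, List.getElem?_eq_getElem hfpos, ← e2, e1, e3]
  obtain ⟨a, b, hab, hfab⟩ :=
    Finite.exists_ne_map_eq_of_infinite (fun n => (⟨(s n).length, hlen n⟩ : Fin t.length))
  have hsl : (s a).length = (s b).length := by
    simpa using congrArg Fin.val hfab
  have hse : s a = s b := by rw [hstake a, hstake b, hsl]
  have hme : m a = m b := by
    by_contra hne
    apply (hfork (s a) (hsB a)).2 hne
    calc (f (s a) (m a)).head? = some (t[(s a).length]'(hlen a)) := hhead a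
      _ = some (t[(s b).length]'(hlen b)) := by simp only [hsl]
      _ = (f (s b) (m b)).head? := (hhead b).symm
      _ = (f (s a) (m b)).head? := by rw [hse]
  have hσe : seqAppend (s a ++ f (s a) (m a)) (ν (s a) (m a)) =
      seqAppend (s b ++ f (s b) (m b)) (ν (s b) (m b)) := by rw [hse, hme]
  have hga := hge a
  have hgb := hge b
  rw [hσe] at hga
  rcases le_total (g a).length (g b).length with hl | hl
  · have hpre := prefix_of_infExtends hga hgb hl
    rcases lt_or_gt_of_ne hab with hc | hc
    · exact (hg2 hc).1 hpre
    · exact (hg2 hc).2.1 hpre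
  · have hpre := prefix_of_infExtends hgb hga hl
    rcases lt_or_gt_of_ne hab with hc | hc
    · exact (hg2 hc).2.1 hpre
    · exact (hg2 hc).1 hpre


/-- Rank of broom sets: for `α ≤ ω₁` with `α' = ordPrime α`:
(1) for `B ∈ B_α`, `D_iie^{α'}(B)` is finite, and for even `α` it is empty or `{∅}`;
(2) for `A ∈ A_α`, `D_iie^{α'}(D_iie(A))` is finite, and for even `α` it is empty
or `{∅}`. -/
theorem broom_sets_rank (α : Ordinal.{0}) (hα : α ≤ omega1) :
    (∀ B : Set (List ℕ), IsBroomB α B →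
      (iterDeriv Diie B (ordPrime α)).Finite ∧
      (EvenOrd α →
        iterDeriv Diie B (ordPrime α) = ∅ ∨
        iterDeriv Diie B (ordPrime α) = {([] : List ℕ)})) ∧
    (∀ A : Set (ℕ → ℕ), IsBroomA α A →
      (iterDeriv Diie (Diie (clTrInf A)) (ordPrime α)).Finite ∧
      (EvenOrd α →
        iterDeriv Diie (Diie (clTrInf A)) (ordPrime α) = ∅ ∨
        iterDeriv Diie (Diie (clTrInf A)) (ordPrime α) = {([] : List ℕ)})) := by
  constructor
  · intro B hB
    obtain ⟨h1, h2⟩ := broom_part1 hB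
    exact ⟨h1, fun he => Set.subset_singleton_iff_eq.mp (h2 he)⟩
  · intro A hA2
    obtain ⟨B, hB, hext⟩ := hA2
    have hsub : clTr (Diie (clTrInf A)) ⊆ clTr B :=
      (clTr_mono (Diie_clTrInf_subset hext)).trans (clTr_idem B)
    have hmain := iterDeriv_mono_base hsub (ordPrime α)
    obtain ⟨h1, h2⟩ := broom_part1 hB
    exact ⟨h1.subset hmain,
      fun he => Set.subset_singleton_iff_eq.mp (hmain.trans (h2 he))⟩

end FBorelPaper
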